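/- arXiv:2502.01904 — 2 statements merged into one kernel-verified Lean document; each statement's English description precedes it below -/
import Mathlib

section
/- Under the setting of the one-round estimator, the variance of f₂ = Σ_{v ∈ U} (A'[u,v]-p)(A'[v,w]-p)/(1-2p)² equals (p²(1-p)²/(1-2p)⁴)·|U| + (p(1-p)/(1-2p)²)·(deg(u) + deg(w)). -/
open MeasureTheory ProbabilityTheory

lemma bern_moments {Ω : Type*} [MeasurableSpace Ω] (μ : Measure Ω) [IsProbabilityMeasure μ]
    {p a : ℝ} (hp0 : 0 < p) (hp1 : p < 1 / 2) {B : Ω → ℝ} (hm : Measurable B)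
    (hv : ∀ ω, B ω = 0 ∨ B ω = 1) (ha : a = 0 ∨ a = 1)
    (h : μ {ω | B ω = a} = ENNReal.ofReal (1 - p)) :
    (∫ ω, (B ω - p) ∂μ) = (1 - 2 * p) * a ∧
      (∫ ω, (B ω - p) ^ 2 ∂μ) = p * (1 - p) + (1 - 2 * p) ^ 2 * a := by
  have hint : Integrable B μ := by
    refine memLp_one_iff_integrable.mp ?_
    refine MemLp.of_bound hm.aestronglyMeasurable 1 (ae_of_all _ fun ω => ?_)
    rcases hv ω with h' | h' <;> simp [h']
  have hs1 : MeasurableSet {ω | B ω = 1} := hm (measurableSet_singleton 1)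
  have hEB' : ∫ ω, B ω ∂μ = (μ {ω | B ω = 1}).toReal := by
    have hB : B = Set.indicator {ω | B ω = 1} (fun _ => (1 : ℝ)) := by
      funext ω
      rcases hv ω with h' | h' <;> simp [Set.indicator_apply, h']
    rw [hB, integral_indicator_const _ hs1]
    simp
    rfl
  have hμ1 : μ {ω | B ω = 1} = ENNReal.ofReal (p + (1 - 2 * p) * a) := by
    rcases ha with ha | ha
    · subst ha
      have hset : {ω | B ω = 1} = {ω | B ω = 0}ᶜ := by
        ext ω
        rcases hv ω with h' | h' <;> simp [h']
      have h0 : MeasurableSet {ω | B ω = 0} := hm (measurableSet_singleton 0)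
      rw [hset, measure_compl h0 (measure_ne_top _ _), h, measure_univ,
        show (1 : ENNReal) = ENNReal.ofReal 1 by simp,
        ← ENNReal.ofReal_sub _ (by linarith)]
      norm_num
    · subst ha
      rw [h]
      congr 1
      ring
  have hpa : (0 : ℝ) ≤ p + (1 - 2 * p) * a := by
    rcases ha with ha | ha <;> rw [ha] <;> nlinarith
  have hEB : ∫ ω, B ω ∂μ = p + (1 - 2 * p) * a := by
    rw [hEB', hμ1, ENNReal.toReal_ofReal hpa]
  constructor
  · rw [integral_sub hint (integrable_const p), integral_const, hEB]
    simp
  · have hfun : ∀ ω, (B ω - p) ^ 2 = (1 - 2 * p) * B ω + p ^ 2 := by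
      intro ω
      rcases hv ω with h' | h' <;> rw [h'] <;> ring
    calc ∫ ω, (B ω - p) ^ 2 ∂μ = ∫ ω, ((1 - 2 * p) * B ω + p ^ 2) ∂μ := by simp_rw [hfun]
      _ = (1 - 2 * p) * (p + (1 - 2 * p) * a) + p ^ 2 := by
          rw [integral_add (hint.const_mul _) (integrable_const _), integral_const_mul, hEB,
            integral_const]
          simp
      _ = p * (1 - p) + (1 - 2 * p) ^ 2 * a := by ring

/-- Variance of the one-round estimator: with all noisy bits mutually independent
randomized-response perturbations with flipping probability `p`, the estimator
`f₂ = Σ_{v ∈ U} (A'[u,v]-p)(A'[v,w]-p)/(1-2p)²` has variance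
`p²(1-p)²/(1-2p)⁴·|U| + p(1-p)/(1-2p)²·(deg u + deg w)`. -/
theorem oneRound_variance {Ω V : Type*} [MeasurableSpace Ω] (μ : Measure Ω)
    [IsProbabilityMeasure μ] [DecidableEq V]
    (U : Finset V) (u w : V) (adj : V → V → ℝ)
    (hadj : ∀ i j, adj i j = 0 ∨ adj i j = 1)
    (p : ℝ) (hp : p ∈ Set.Ioo (0 : ℝ) (1 / 2))
    (X Y : V → Ω → ℝ)
    (hmX : ∀ v, Measurable (X v)) (hmY : ∀ v, Measurable (Y v))
    (hvX : ∀ v ω, X v ω = 0 ∨ X v ω = 1) (hvY : ∀ v ω, Y v ω = 0 ∨ Y v ω = 1)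
    (hX : ∀ v ∈ U, μ {ω | X v ω = adj u v} = ENNReal.ofReal (1 - p))
    (hY : ∀ v ∈ U, μ {ω | Y v ω = adj v w} = ENNReal.ofReal (1 - p))
    (hind : iIndepFun
      (fun i : V × Bool => if i.2 then X i.1 else Y i.1) μ) :
    variance (fun ω => ∑ v ∈ U, (X v ω - p) * (Y v ω - p) / (1 - 2 * p) ^ 2) μ =
      p ^ 2 * (1 - p) ^ 2 / (1 - 2 * p) ^ 4 * U.card +
        p * (1 - p) / (1 - 2 * p) ^ 2 *
          ((U.filter (fun v => adj u v = 1)).card + (U.filter (fun v => adj v w = 1)).card) := by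
  obtain ⟨hp0, hp1⟩ := hp
  have hc : (0 : ℝ) < 1 - 2 * p := by linarith
  have hc2 : ((1 : ℝ) - 2 * p) ^ 2 ≠ 0 := by positivity
  set Zf : V → Ω → ℝ := fun v ω => (X v ω - p) * (Y v ω - p) / (1 - 2 * p) ^ 2 with hZdef
  have habs : ∀ t : ℝ, t = 0 ∨ t = 1 → |t - p| ≤ 1 := by
    rintro t (rfl | rfl) <;> rw [abs_le] <;> constructor <;> linarith
  have hmf : ∀ i : V × Bool, Measurable (if i.2 then X i.1 else Y i.1) := by
    rintro ⟨v, _ | _⟩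
    · simpa using hmY v
    · simpa using hmX v
  have hZmeas : ∀ v, Measurable (Zf v) := fun v =>
    (((hmX v).sub measurable_const).mul ((hmY v).sub measurable_const)).div_const _
  have hZmem : ∀ v, MemLp (Zf v) 2 μ := by
    intro v
    refine MemLp.of_bound (hZmeas v).aestronglyMeasurable (1 / (1 - 2 * p) ^ 2)
      (ae_of_all _ fun ω => ?_)
    have h1 := habs _ (hvX v ω)
    have h2 := habs _ (hvY v ω)
    have hmul : |(X v ω - p) * (Y v ω - p)| ≤ 1 := by
      rw [abs_mul]
      calc |X v ω - p| * |Y v ω - p| ≤ 1 * 1 :=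
            mul_le_mul h1 h2 (abs_nonneg _) zero_le_one
        _ = 1 := one_mul 1
    have : |Zf v ω| = |(X v ω - p) * (Y v ω - p)| / (1 - 2 * p) ^ 2 := by
      rw [hZdef]
      rw [abs_div, abs_of_pos (by positivity : (0:ℝ) < (1 - 2*p)^2)]
    rw [Real.norm_eq_abs, this]
    rw [div_le_div_iff₀ (by positivity) (by positivity)]
    nlinarith [abs_nonneg ((X v ω - p) * (Y v ω - p))]
  -- pairwise independence of the summands
  have hpair : Set.Pairwise ↑U fun i j => IndepFun (Zf i) (Zf j) μ := by
    intro i _ j _ hij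
    have h2 : IndepFun (fun ω => (X i ω, Y i ω)) (fun ω => (X j ω, Y j ω)) μ := by
      have := hind.indepFun_prodMk_prodMk hmf (i, true) (i, false) (j, true) (j, false)
        (by simp [hij]) (by simp) (by simp) (by simp [hij])
      simpa using this
    have hφ : Measurable fun q : ℝ × ℝ => (q.1 - p) * (q.2 - p) / (1 - 2 * p) ^ 2 :=
      ((measurable_fst.sub measurable_const).mul
        (measurable_snd.sub measurable_const)).div_const _
    exact h2.comp hφ hφ
  have hsum_eq : (fun ω => ∑ v ∈ U, (X v ω - p) * (Y v ω - p) / (1 - 2 * p) ^ 2)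
      = ∑ v ∈ U, Zf v := by
    funext ω
    rw [Finset.sum_apply]
  have key : variance (∑ v ∈ U, Zf v) μ = ∑ v ∈ U, variance (Zf v) μ :=
    IndepFun.variance_sum (fun v _ => hZmem v) hpair
  -- compute the variance of each summand
  have hvar : ∀ v ∈ U, variance (Zf v) μ =
      p ^ 2 * (1 - p) ^ 2 / (1 - 2 * p) ^ 4
        + p * (1 - p) / (1 - 2 * p) ^ 2 * (adj u v + adj v w) := by
    intro v hv
    obtain ⟨hEX, hEX2⟩ := bern_moments μ hp0 hp1 (hmX v) (hvX v) (hadj u v) (hX v hv)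
    obtain ⟨hEY, hEY2⟩ := bern_moments μ hp0 hp1 (hmY v) (hvY v) (hadj v w) (hY v hv)
    have hIxy : IndepFun (X v) (Y v) μ := by
      have := hind.indepFun (show ((v, true) : V × Bool) ≠ (v, false) by simp)
      simpa using this
    have hIη : IndepFun (fun ω => X v ω - p) (fun ω => Y v ω - p) μ :=
      hIxy.comp (measurable_id.sub_const p) (measurable_id.sub_const p)
    have hIη2 : IndepFun (fun ω => (X v ω - p) ^ 2) (fun ω => (Y v ω - p) ^ 2) μ :=
      hIxy.comp ((measurable_id.sub_const p).pow_const 2)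
        ((measurable_id.sub_const p).pow_const 2)
    have hmη : AEStronglyMeasurable (fun ω => X v ω - p) μ :=
      ((hmX v).sub measurable_const).aestronglyMeasurable
    have hmθ : AEStronglyMeasurable (fun ω => Y v ω - p) μ :=
      ((hmY v).sub measurable_const).aestronglyMeasurable
    have hEmul : ∫ ω, (X v ω - p) * (Y v ω - p) ∂μ
        = (1 - 2 * p) * adj u v * ((1 - 2 * p) * adj v w) := by
      have := hIη.integral_mul_eq_mul_integral hmη hmθ
      rw [← hEX, ← hEY]
      exact this
    have hEmul2 : ∫ ω, (X v ω - p) ^ 2 * (Y v ω - p) ^ 2 ∂μ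
        = (p * (1 - p) + (1 - 2 * p) ^ 2 * adj u v)
            * (p * (1 - p) + (1 - 2 * p) ^ 2 * adj v w) := by
      have := hIη2.integral_mul_eq_mul_integral (((hmX v).sub measurable_const).pow_const 2).aestronglyMeasurable (((hmY v).sub measurable_const).pow_const 2).aestronglyMeasurable
      rw [← hEX2, ← hEY2]
      exact this
    have hEZ : ∫ ω, Zf v ω ∂μ
        = (1 - 2 * p) * adj u v * ((1 - 2 * p) * adj v w) / (1 - 2 * p) ^ 2 := by
      rw [hZdef]
      simp only []
      rw [integral_div, hEmul]
    have hEZ2 : ∫ ω, (Zf v ω) ^ 2 ∂μ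
        = (p * (1 - p) + (1 - 2 * p) ^ 2 * adj u v)
            * (p * (1 - p) + (1 - 2 * p) ^ 2 * adj v w) / ((1 - 2 * p) ^ 2) ^ 2 := by
      have hfun : ∀ ω, (Zf v ω) ^ 2
          = (X v ω - p) ^ 2 * (Y v ω - p) ^ 2 / ((1 - 2 * p) ^ 2) ^ 2 := by
        intro ω
        rw [hZdef]
        simp only []
        rw [div_pow, mul_pow]
      simp_rw [hfun]
      rw [integral_div, hEmul2]
    rw [variance_eq_sub (hZmem v)]
    have hpow : (fun ω => (Zf v ω) ^ 2) = Zf v ^ 2 := by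
      funext ω
      simp
    rw [show μ[Zf v ^ 2] = ∫ ω, (Zf v ω) ^ 2 ∂μ by rw [hpow], hEZ2,
      show μ[Zf v] = ∫ ω, Zf v ω ∂μ from rfl, hEZ]
    rcases hadj u v with hA | hA <;> rcases hadj v w with hB | hB <;> rw [hA, hB] <;>
      field_simp <;> ring
  rw [hsum_eq, key, Finset.sum_congr rfl hvar, Finset.sum_add_distrib, Finset.sum_const,
    ← Finset.mul_sum, Finset.sum_add_distrib]
  have hA : ∑ v ∈ U, adj u v = ((U.filter (fun v => adj u v = 1)).card : ℝ) := by
    rw [← Finset.sum_boole]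
    refine Finset.sum_congr rfl fun v _ => ?_
    rcases hadj u v with h' | h' <;> simp [h']
  have hB : ∑ v ∈ U, adj v w = ((U.filter (fun v => adj v w = 1)).card : ℝ) := by
    rw [← Finset.sum_boole]
    refine Finset.sum_congr rfl fun v _ => ?_
    rcases hadj v w with h' | h' <;> simp [h']
  rw [hA, hB, nsmul_eq_mul]
  ring
end

section
/- Under the setting of the single-source estimator with flipping probability p ∈ (0,1/2), Laplace noise of scale (1-p)/((1-2p)ε₂), and d_u = deg(u), the expected L2 loss (= variance) of f̃_u equals (p(1-p)/(1-2p)²)·d_u + 2(1-p)²/((1-2p)²ε₂²). -/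
open MeasureTheory ProbabilityTheory

lemma variance_sub_const' {Ω : Type*} [MeasurableSpace Ω] {μ : Measure Ω}
    [IsProbabilityMeasure μ] {X : Ω → ℝ} (hX : Integrable X μ) (c : ℝ) :
    variance (fun ω => X ω - c) μ = variance X μ := by
  have hint : μ[fun ω => X ω - c] = μ[X] - c := by
    rw [integral_sub hX (integrable_const c), integral_const]
    simp
  unfold variance evariance
  rw [hint]
  congr 1
  refine lintegral_congr fun ω => ?_
  congr 2
  ring_nf

lemma bernoulli_like_variance {Ω : Type*} [MeasurableSpace Ω] (μ : Measure Ω)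
    [IsProbabilityMeasure μ]
    (p : ℝ) (hp : p ∈ Set.Ioo (0 : ℝ) (1 / 2))
    (X : Ω → ℝ) (hm : Measurable X) (hv : ∀ ω, X ω = 0 ∨ X ω = 1)
    (t : ℝ) (ht : t = 0 ∨ t = 1)
    (hX : μ {ω | X ω = t} = ENNReal.ofReal (1 - p)) :
    variance X μ = p * (1 - p) := by
  have hp1 : (0:ℝ) < 1 - p := by have := hp.2; linarith
  have hmem : MemLp X 2 μ :=
    MemLp.of_bound hm.aestronglyMeasurable 1
      (Filter.Eventually.of_forall fun ω => by rcases hv ω with h | h <;> simp [h])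
  have hsq : X ^ 2 = X := by funext ω; rcases hv ω with h | h <;> simp [h]
  have hA : MeasurableSet {ω | X ω = (1:ℝ)} := hm (measurableSet_singleton 1)
  have hindic : X = Set.indicator {ω | X ω = (1:ℝ)} (fun _ => (1:ℝ)) := by
    funext ω
    rcases hv ω with h | h <;> simp [Set.indicator, h]
  have hEX : μ[X] = (μ {ω | X ω = (1:ℝ)}).toReal := by
    conv_lhs => rw [hindic]
    rw [integral_indicator_const (1:ℝ) hA]
    simp
    rfl
  have hq : μ[X] = 1 - p ∨ μ[X] = p := by
    rcases ht with h | h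
    · right
      subst h
      have hcompl : {ω | X ω = (1:ℝ)} = {ω | X ω = (0:ℝ)}ᶜ := by
        ext ω; rcases hv ω with h | h <;> simp [h]
      have h0 : MeasurableSet {ω | X ω = (0:ℝ)} := hm (measurableSet_singleton 0)
      rw [hEX, hcompl, measure_compl h0 (measure_ne_top μ _), hX,
        measure_univ, ENNReal.toReal_sub_of_le (by
          rw [← ENNReal.ofReal_one]
          exact ENNReal.ofReal_le_ofReal (by linarith [hp.1])) ENNReal.one_ne_top]
      rw [ENNReal.toReal_one, ENNReal.toReal_ofReal hp1.le]
      ring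
    · left
      subst h
      rw [hEX, hX, ENNReal.toReal_ofReal hp1.le]
  rw [variance_eq_sub hmem, hsq]
  rcases hq with h | h <;> rw [h] <;> ring

/-- Expected L2 loss (= variance, by unbiasedness) of the single-source estimator:
with mutually independent randomized-response bits (flipping probability `p`) and an
independent Laplace noise `Z` of scale `(1-p)/((1-2p)ε₂)` (hence variance `2b²`, mean 0),
the variance of `f̃_u` equals `p(1-p)/(1-2p)²·d_u + 2(1-p)²/((1-2p)²ε₂²)`,
where `d_u = |N(u)|`. -/
theorem singleSource_variance {Ω V : Type*} [MeasurableSpace Ω] (μ : Measure Ω)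
    [IsProbabilityMeasure μ] [DecidableEq V]
    (Nu Nw : Finset V)
    (p ε₂ : ℝ) (hp : p ∈ Set.Ioo (0 : ℝ) (1 / 2)) (hε₂ : 0 < ε₂)
    (X : V → Ω → ℝ)
    (hmX : ∀ v, Measurable (X v)) (hvX : ∀ v ω, X v ω = 0 ∨ X v ω = 1)
    (hX : ∀ v ∈ Nu,
      μ {ω | X v ω = (if v ∈ Nw then (1 : ℝ) else 0)} = ENNReal.ofReal (1 - p))
    (hXind : iIndepFun X μ)
    (Z : Ω → ℝ) (hmZ : Measurable Z)
    (hZmean : ∫ ω, Z ω ∂μ = 0)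
    (hZvar : variance Z μ = 2 * ((1 - p) / ((1 - 2 * p) * ε₂)) ^ 2)
    (hZind : IndepFun Z (fun ω => ∑ v ∈ Nu, (X v ω - p) / (1 - 2 * p)) μ) :
    variance (fun ω => (∑ v ∈ Nu, (X v ω - p) / (1 - 2 * p)) + Z ω) μ =
      p * (1 - p) / (1 - 2 * p) ^ 2 * Nu.card +
        2 * (1 - p) ^ 2 / ((1 - 2 * p) ^ 2 * ε₂ ^ 2) := by
  have hc : (0:ℝ) < 1 - 2 * p := by have := hp.2; linarith
  have hp1 : (0:ℝ) < 1 - p := by have := hp.2; linarith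
  set Y : V → Ω → ℝ := fun v ω => (X v ω - p) / (1 - 2 * p) with hY
  -- MemLp facts
  have hmemX : ∀ v, MemLp (X v) 2 μ := fun v =>
    MemLp.of_bound (hmX v).aestronglyMeasurable 1
      (Filter.Eventually.of_forall fun ω => by rcases hvX v ω with h | h <;> simp [h])
  have hmemY : ∀ v, MemLp (Y v) 2 μ := by
    intro v
    have h1 : MemLp (fun ω => X v ω - p) 2 μ := (hmemX v).sub (memLp_const p)
    have h2 := h1.const_mul ((1 - 2 * p)⁻¹)
    have : Y v = fun ω => (1 - 2 * p)⁻¹ * (X v ω - p) := by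
      funext ω; simp [hY, div_eq_inv_mul]
    rw [this]
    exact h2
  -- variance of each Y v
  have hvarY : ∀ v ∈ Nu, variance (Y v) μ = p * (1 - p) / (1 - 2 * p) ^ 2 := by
    intro v hv
    have hXv : variance (X v) μ = p * (1 - p) :=
      bernoulli_like_variance μ p hp (X v) (hmX v) (hvX v) _
        (by by_cases h : v ∈ Nw <;> simp [h]) (hX v hv)
    have h1 : Y v = fun ω => (1 / (1 - 2 * p)) * (X v ω - p) := by
      funext ω; simp [hY, div_eq_inv_mul]
    rw [h1, variance_const_mul, variance_sub_const' ((hmemX v).integrable one_le_two) p, hXv]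
    field_simp
  -- pairwise independence of the Y's
  have hYind : Set.Pairwise ↑Nu fun i j => IndepFun (Y i) (Y j) μ := by
    intro i _ j _ hij
    have hφ : Measurable fun x : ℝ => (x - p) / (1 - 2 * p) :=
      (measurable_id.sub_const p).div_const _
    exact (hXind.indepFun hij).comp hφ hφ
  -- variance of the sum
  have hsumY : (fun ω => ∑ v ∈ Nu, (X v ω - p) / (1 - 2 * p)) = ∑ v ∈ Nu, Y v := by
    funext ω; simp [hY]
  have hmemS : MemLp (∑ v ∈ Nu, Y v) 2 μ := memLp_finset_sum' _ fun v _ => hmemY v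
  have hvarS : variance (∑ v ∈ Nu, Y v) μ = p * (1 - p) / (1 - 2 * p) ^ 2 * Nu.card := by
    rw [IndepFun.variance_sum (fun v _ => hmemY v) hYind,
      Finset.sum_congr rfl hvarY, Finset.sum_const, nsmul_eq_mul, mul_comm]
  -- Z is in L2
  have hvpos : (0:ℝ) < 2 * ((1 - p) / ((1 - 2 * p) * ε₂)) ^ 2 := by positivity
  have hmemZ : MemLp Z 2 μ := by
    by_contra h
    have := evariance_eq_top hmZ.aestronglyMeasurable h
    rw [variance, this] at hZvar
    simp at hZvar
    rcases hZvar with h | h | h <;> linarith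
  -- put everything together
  have hfin : (fun ω => (∑ v ∈ Nu, (X v ω - p) / (1 - 2 * p)) + Z ω) =
      (∑ v ∈ Nu, Y v) + Z := by
    funext ω; simp [hY]
  rw [hfin, IndepFun.variance_add hmemS hmemZ (by rw [← hsumY]; exact hZind.symm),
    hvarS, hZvar]
  have hε₂' : ε₂ ≠ 0 := ne_of_gt hε₂
  have hc' : (1 - 2 * p) ≠ 0 := ne_of_gt hc
  field_simp
end
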